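/- Fix α > 0. Define p₀(x) = α W_p((1/α) ln(1/x)) / ln(1/x) for 0 < x ≤ x₀ (x₀ small), where W_p is the principal branch of the Lambert W function. Then for 0 < λ ≤ λ₀, |{x ∈ (0,x₀] : 1 + p₀(x) ≤ 1+λ}| = λ^{α/λ}, i.e., p₀ is the inverse of λ ↦ λ^{α/λ} on (0, λ₀]. -/
import Mathlib

open MeasureTheory Real Set
open scoped ENNReal

private lemma texp_le {a b : ℝ} (ha : 0 ≤ a) (h : a ≤ b) :
    a * Real.exp a ≤ b * Real.exp b :=
  (mul_le_mul_of_nonneg_left (Real.exp_le_exp.2 h) ha).trans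
    (mul_le_mul_of_nonneg_right h (Real.exp_pos b).le)

theorem stmt_19 (α : ℝ) (hα : 0 < α) (Wp : ℝ → ℝ)
    (hWp : ∀ y ≥ (0:ℝ), -1 ≤ Wp y ∧ Wp y * Real.exp (Wp y) = y) :
    ∃ x₀ ∈ Ioo (0:ℝ) 1, ∃ lam0 > (0:ℝ), ∀ l ∈ Ioc (0:ℝ) lam0,
      volume {x ∈ Ioc (0:ℝ) x₀ |
          1 + α * Wp ((1/α) * Real.log (1/x)) / Real.log (1/x) ≤ 1 + l} =
        ENNReal.ofReal (l ^ (α / l)) := by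
  refine ⟨1/2, ⟨by norm_num, by norm_num⟩, min (1/2) ((1/2 : ℝ) ^ (1/α)),
    lt_min (by norm_num) (Real.rpow_pos_of_pos (by norm_num) _), ?_⟩
  rintro l ⟨hl0, hl1⟩
  have hl2 : l ≤ 1/2 := hl1.trans (min_le_left _ _)
  have hlr : l ≤ (1/2:ℝ) ^ (1/α) := hl1.trans (min_le_right _ _)
  set m := l ^ (α / l) with hm
  have hm0 : 0 < m := Real.rpow_pos_of_pos hl0 _
  have hm2 : m ≤ 1/2 := by
    have h1 : m ≤ l ^ α := Real.rpow_le_rpow_of_exponent_ge hl0 (by linarith)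
      (by rw [le_div_iff₀ hl0]; nlinarith)
    have h2 : l ^ α ≤ ((1/2:ℝ) ^ (1/α)) ^ α := Real.rpow_le_rpow hl0.le hlr hα.le
    have h3 : ((1/2:ℝ) ^ (1/α)) ^ α = 1/2 := by
      rw [← Real.rpow_mul (by norm_num), one_div_mul_cancel hα.ne', Real.rpow_one]
    linarith
  have hlogm : Real.log m = (α / l) * Real.log l := Real.log_rpow hl0 _
  have hlogl : Real.log l < 0 := Real.log_neg hl0 (by linarith)
  -- the key equivalence: for 0 < x ≤ 1/2,
  --   x ≤ m  ↔  l * log x ≤ α * log l  (as real inequalities)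
  have key : {x ∈ Ioc (0:ℝ) (1/2) |
      1 + α * Wp ((1/α) * Real.log (1/x)) / Real.log (1/x) ≤ 1 + l} = Ioc 0 m := by
    ext x
    simp only [Set.mem_setOf_eq, Set.mem_Ioc, add_le_add_iff_left]
    constructor
    · rintro ⟨⟨hx0, hx2⟩, hcond⟩
      refine ⟨hx0, ?_⟩
      have hlogx : Real.log x < 0 := Real.log_neg hx0 (by linarith)
      set y := (1/α) * Real.log (1/x) with hy
      have hyval : y = (1/α) * (-Real.log x) := by
        rw [hy, one_div x, Real.log_inv]
      have hy0 : 0 < y := by rw [hyval]; exact mul_pos (by positivity) (by linarith)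
      obtain ⟨hW1, hW2⟩ := hWp y hy0.le
      have hWpos : 0 < Wp y := by
        nlinarith [Real.exp_pos (Wp y), hW2, hy0]
      have hlx : Real.log (1/x) = α * y := by rw [hy]; field_simp
      have hWly : Wp y ≤ l * y := by
        rw [hlx] at hcond
        have hαy : 0 < α * y := by positivity
        rw [div_le_iff₀ hαy] at hcond
        nlinarith [hcond]
      have h1 : 1 ≤ l * Real.exp (l * y) := by
        have ht := texp_le hWpos.le hWly
        rw [hW2] at ht
        nlinarith [ht, hy0, Real.exp_pos (l * y)]
      have h2 : Real.log (1/l) ≤ l * y := by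
        rw [Real.log_le_iff_le_exp (by positivity), div_le_iff₀ hl0]
        linarith
      have h2' : l * Real.log x ≤ α * Real.log l := by
        rw [one_div l, Real.log_inv, hyval] at h2
        have := mul_le_mul_of_nonneg_left h2 hα.le
        calc l * Real.log x = -(α * (l * (1/α * -Real.log x))) := by field_simp
          _ ≤ -(α * -Real.log l) := by linarith
          _ = α * Real.log l := by ring
      have h3 : Real.log x ≤ Real.log m := by
        rw [hlogm, div_mul_eq_mul_div, le_div_iff₀ hl0]
        linarith [h2']
      calc x = Real.exp (Real.log x) := (Real.exp_log hx0).symm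
        _ ≤ Real.exp (Real.log m) := Real.exp_le_exp.2 h3
        _ = m := Real.exp_log hm0
    · rintro ⟨hx0, hxm⟩
      have hx2 : x ≤ 1/2 := hxm.trans hm2
      refine ⟨⟨hx0, hx2⟩, ?_⟩
      have hlogx : Real.log x < 0 := Real.log_neg hx0 (by linarith)
      set y := (1/α) * Real.log (1/x) with hy
      have hyval : y = (1/α) * (-Real.log x) := by
        rw [hy, one_div x, Real.log_inv]
      have hy0 : 0 < y := by rw [hyval]; exact mul_pos (by positivity) (by linarith)
      obtain ⟨hW1, hW2⟩ := hWp y hy0.le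
      have hWpos : 0 < Wp y := by
        nlinarith [Real.exp_pos (Wp y), hW2, hy0]
      have hlx : Real.log (1/x) = α * y := by rw [hy]; field_simp
      have h3 : Real.log x ≤ Real.log m := Real.log_le_log hx0 hxm
      have h2' : l * Real.log x ≤ α * Real.log l := by
        rw [hlogm, div_mul_eq_mul_div, le_div_iff₀ hl0] at h3
        linarith
      have hly : -Real.log l ≤ l * y := by
        rw [hyval]
        rw [show l * (1/α * -Real.log x) = (-(l * Real.log x))/α by field_simp,
          le_div_iff₀ hα]
        nlinarith [h2']
      have hexp : 1/l ≤ Real.exp (l * y) := by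
        calc 1/l = Real.exp (Real.log (1/l)) := (Real.exp_log (by positivity)).symm
          _ ≤ Real.exp (l * y) := by
              apply Real.exp_le_exp.2
              rw [one_div l, Real.log_inv]
              exact hly
      have hWly : Wp y ≤ l * y := by
        by_contra hc
        push_neg at hc
        have hly0 : 0 ≤ l * y := by positivity
        have h5 : l * y * Real.exp (l * y) < Wp y * Real.exp (Wp y) :=
          lt_of_le_of_lt (mul_le_mul_of_nonneg_left (Real.exp_le_exp.2 hc.le) hly0)
            (mul_lt_mul_of_pos_right hc (Real.exp_pos _))
        rw [hW2] at h5
        -- but l*y*exp(l*y) ≥ l*y*(1/l) = y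
        have h6 : y ≤ l * y * Real.exp (l * y) := by
          calc y = l * y * (1/l) := by field_simp
            _ ≤ l * y * Real.exp (l * y) := mul_le_mul_of_nonneg_left hexp hly0
        linarith
      rw [hlx]
      have hαy : 0 < α * y := by positivity
      rw [div_le_iff₀ hαy]
      calc α * Wp y ≤ α * (l * y) := mul_le_mul_of_nonneg_left hWly hα.le
        _ = l * (α * y) := by ring
  rw [key, Real.volume_Ioc, sub_zero]
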